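/- Let P = {2α, α+β, 2β} ⊆ N^n with α ≠ β be an SDSOS pattern, and suppose α+β ∉ 2N^n (some coordinate of α+β is odd). Then C_P(R^n) = { v ∈ R^P : v_{2α} ≥ 0, v_{2β} ≥ 0, v_{α+β}^2 ≤ v_{2α} v_{2β} }, and P_P(R^n) = { f ∈ R[x]_P : f_{2α} ≥ 0, f_{2β} ≥ 0, f_{α+β}^2 ≤ 4 f_{2α} f_{2β} }. -/

import Mathlib

open Finset Filter Real Topology

private lemma prod_two_mul {n : ℕ} (x : Fin n → ℝ) (e : Fin n → ℕ) :
    ∏ i, x i ^ (2 * e i) = (∏ i, x i ^ e i) ^ 2 := by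
  rw [← Finset.prod_pow]
  exact Finset.prod_congr rfl fun i _ => by rw [mul_comm, pow_mul]

private lemma prod_add_exp {n : ℕ} (x : Fin n → ℝ) (e f : Fin n → ℕ) :
    ∏ i, x i ^ (e i + f i) = (∏ i, x i ^ e i) * (∏ i, x i ^ f i) := by
  rw [← Finset.prod_mul_distrib]
  exact Finset.prod_congr rfl fun i _ => by rw [pow_add]

private lemma prod_if_single {n : ℕ} (j : Fin n) (y : ℝ) (e : Fin n → ℕ) :
    ∏ i, (if i = j then y else 1 : ℝ) ^ e i = y ^ e j := by
  rw [Finset.prod_eq_single j (fun i _ hi => by simp [hi]) (by simp)]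
  simp

private lemma gen_repr {n : ℕ} (α β : Fin n → ℕ) (j : Fin n) (hodd : ¬ 2 ∣ (α j + β j))
    (t : ℝ) (ht : t ≠ 0) :
    ∃ (x : Fin n → ℝ) (d : ℝ), 0 < d ∧
      ((∏ i, x i ^ (2 * α i), ∏ i, x i ^ (α i + β i), ∏ i, x i ^ (2 * β i)) : ℝ × ℝ × ℝ)
        = d • ((t ^ 2, t, 1) : ℝ × ℝ × ℝ) := by
  have hab : (α j : ℝ) - (β j : ℝ) ≠ 0 := by
    have hne : α j ≠ β j := fun h => hodd ⟨α j, by omega⟩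
    intro h
    exact hne (by exact_mod_cast sub_eq_zero.mp h)
  set a := α j with ha
  set b := β j with hb
  set c : ℝ := ((a : ℝ) - (b : ℝ))⁻¹ with hc
  have habs : (0:ℝ) < |t| := abs_pos.mpr ht
  set s : ℝ := |t| ^ c with hs
  have hpow : ∀ k : ℕ, s ^ (k : ℕ) = |t| ^ (c * (k : ℝ)) := by
    intro k
    rw [hs, ← Real.rpow_natCast (|t| ^ c) k, ← Real.rpow_mul (abs_nonneg t)]
  have hspos : 0 < s := Real.rpow_pos_of_pos habs c
  obtain ⟨ε, hε1, hεt⟩ : ∃ ε : ℝ, (ε = 1 ∨ ε = -1) ∧ ε * |t| = t := by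
    rcases le_or_gt 0 t with h | h
    · exact ⟨1, Or.inl rfl, by rw [abs_of_nonneg h, one_mul]⟩
    · exact ⟨-1, Or.inr rfl, by rw [abs_of_neg h]; ring⟩
  have hoddab : Odd (a + b) := Nat.odd_iff.mpr (by omega)
  have hεodd : ε ^ (a + b) = ε := by
    rcases hε1 with rfl | rfl
    · rw [one_pow]
    · exact hoddab.neg_one_pow
  have hε2 : ∀ k : ℕ, ε ^ (2 * k) = 1 := by
    intro k
    rcases hε1 with rfl | rfl
    · rw [one_pow]
    · rw [pow_mul]; norm_num
  have key1 : s ^ (2 * a) = s ^ (2 * b) * t ^ 2 := by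
    rw [hpow, hpow,
      show c * ((2 * a : ℕ) : ℝ) = c * ((2 * b : ℕ) : ℝ) + 2 by
        rw [hc]; push_cast; field_simp; ring,
      Real.rpow_add habs,
      show |t| ^ (2:ℝ) = t ^ 2 by
        rw [show (2:ℝ) = ((2:ℕ):ℝ) by norm_num, Real.rpow_natCast, sq_abs]]
  have key2 : ε * s ^ (a + b) = s ^ (2 * b) * t := by
    rw [hpow, hpow,
      show c * ((a + b : ℕ) : ℝ) = c * ((2 * b : ℕ) : ℝ) + 1 by
        rw [hc]; push_cast; field_simp; ring,
      Real.rpow_add habs, Real.rpow_one]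
    rw [mul_comm ε, mul_assoc, mul_comm (|t|) ε, hεt]
  refine ⟨fun i => if i = j then ε * s else 1, s ^ (2 * b), pow_pos hspos _, ?_⟩
  simp only [Prod.smul_mk, smul_eq_mul, Prod.mk.injEq]
  rw [prod_if_single, prod_if_single, prod_if_single]
  refine ⟨?_, ?_, ?_⟩
  · rw [mul_pow, hε2, one_mul]
    exact key1
  · rw [mul_pow, hεodd]
    exact key2
  · rw [mul_pow, hε2, one_mul, mul_one]

private lemma two_mem {n : ℕ} (α β : Fin n → ℕ) (j : Fin n) (hodd : ¬ 2 ∣ (α j + β j))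
    (c₁ c₂ t₁ t₂ : ℝ) (hc₁ : 0 ≤ c₁) (hc₂ : 0 ≤ c₂) (ht₁ : t₁ ≠ 0) (ht₂ : t₂ ≠ 0) :
    ∃ (m : ℕ) (c : Fin m → ℝ) (x : Fin m → (Fin n → ℝ)),
      (∀ t, 0 ≤ c t) ∧
      c₁ • ((t₁ ^ 2, t₁, 1) : ℝ × ℝ × ℝ) + c₂ • ((t₂ ^ 2, t₂, 1) : ℝ × ℝ × ℝ)
        = ∑ t, c t • ((∏ i, x t i ^ (2 * α i), ∏ i, x t i ^ (α i + β i),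
            ∏ i, x t i ^ (2 * β i)) : ℝ × ℝ × ℝ) := by
  obtain ⟨x₁, d₁, hd₁, he₁⟩ := gen_repr α β j hodd t₁ ht₁
  obtain ⟨x₂, d₂, hd₂, he₂⟩ := gen_repr α β j hodd t₂ ht₂
  refine ⟨2, ![c₁ / d₁, c₂ / d₂], ![x₁, x₂], ?_, ?_⟩
  · intro t
    fin_cases t
    · exact div_nonneg hc₁ hd₁.le
    · exact div_nonneg hc₂ hd₂.le
  · rw [Fin.sum_univ_two]
    simp only [Matrix.cons_val_zero, Matrix.cons_val_one, Matrix.head_cons]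
    rw [he₁, he₂, smul_smul, smul_smul, div_mul_cancel₀ _ hd₁.ne', div_mul_cancel₀ _ hd₂.ne']

private lemma quad_facts (A B C : ℝ) (h : ∀ t : ℝ, t ≠ 0 → 0 ≤ A * t ^ 2 + B * t + C) :
    0 ≤ A ∧ 0 ≤ C ∧ B ^ 2 ≤ 4 * (A * C) := by
  have hC : 0 ≤ C := by
    by_contra hC
    push_neg at hC
    set r : ℝ := min 1 (-C / (2 * (|A| + |B| + 1))) with hrdef
    have hr0 : 0 < r := lt_min one_pos (div_pos (neg_pos.mpr hC) (by positivity))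
    have h1 := h r hr0.ne'
    have hr1 : r ≤ 1 := min_le_left _ _
    have hr2 : r ≤ -C / (2 * (|A| + |B| + 1)) := min_le_right _ _
    have hMr : (|A| + |B| + 1) * r ≤ -C / 2 := by
      have hpos : (0:ℝ) < 2 * (|A| + |B| + 1) := by positivity
      rw [le_div_iff₀ hpos] at hr2
      nlinarith
    have hAr : A * r ^ 2 ≤ |A| * r := by
      have s1 : A * r ^ 2 ≤ |A| * r ^ 2 := mul_le_mul_of_nonneg_right (le_abs_self A) (sq_nonneg r)
      have s2 : |A| * r ^ 2 ≤ |A| * r := by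
        nlinarith [mul_nonneg (abs_nonneg A) (mul_nonneg hr0.le (sub_nonneg.mpr hr1))]
      linarith
    have hBr : B * r ≤ |B| * r := by nlinarith [le_abs_self B]
    nlinarith
  have hfull : ∀ t : ℝ, 0 ≤ A * t ^ 2 + B * t + C := by
    intro t
    rcases eq_or_ne t 0 with rfl | ht
    · simpa using hC
    · exact h t ht
  have hA : 0 ≤ A := by
    by_contra hA
    push_neg at hA
    have key : ∀ t : ℝ, 0 ≤ A * t ^ 2 + C := by
      intro t
      have h1 := hfull t
      have h2 := hfull (-t)
      nlinarith
    have hr2 : Real.sqrt ((C + 1) / (-A)) ^ 2 = (C + 1) / (-A) :=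
      Real.sq_sqrt (le_of_lt (div_pos (by linarith) (by linarith)))
    have h3 := key (Real.sqrt ((C + 1) / (-A)))
    rw [hr2] at h3
    have h5 : A * ((C + 1) / (-A)) = -(C + 1) := by
      field_simp [hA.ne]
    linarith [h5 ▸ h3]
  refine ⟨hA, hC, ?_⟩
  have := discrim_le_zero (a := A) (b := B) (c := C) (fun x => by nlinarith [hfull x])
  rw [discrim] at this
  linarith

/-- SDSOS pattern `P = {2α, α+β, 2β}` with `α ≠ β` and `α+β` having an odd coordinate:
the moment cone is `{v : v_{2α} ≥ 0, v_{2β} ≥ 0, v_{α+β}² ≤ v_{2α} v_{2β}}` and the cone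
of polynomials supported on `P` nonnegative on `ℝⁿ` is
`{f : f_{2α} ≥ 0, f_{2β} ≥ 0, f_{α+β}² ≤ 4 f_{2α} f_{2β}}`. Coordinates of `ℝ^P` are
ordered as `(v_{2α}, v_{α+β}, v_{2β})`. -/
theorem sdsos_pattern_cones (n : ℕ) (α β : Fin n → ℕ) (hne : α ≠ β)
    (hodd : ∃ i, ¬ 2 ∣ (α i + β i)) :
    closure {v : ℝ × ℝ × ℝ |
        ∃ (m : ℕ) (c : Fin m → ℝ) (x : Fin m → (Fin n → ℝ)),
          (∀ t, 0 ≤ c t) ∧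
          v = ∑ t, c t • ((∏ i, x t i ^ (2 * α i), ∏ i, x t i ^ (α i + β i),
              ∏ i, x t i ^ (2 * β i)) : ℝ × ℝ × ℝ)}
      = {v : ℝ × ℝ × ℝ | 0 ≤ v.1 ∧ 0 ≤ v.2.2 ∧ v.2.1 ^ 2 ≤ v.1 * v.2.2}
    ∧ {f : ℝ × ℝ × ℝ | ∀ x : Fin n → ℝ,
          0 ≤ f.1 * ∏ i, x i ^ (2 * α i) + f.2.1 * ∏ i, x i ^ (α i + β i) +
            f.2.2 * ∏ i, x i ^ (2 * β i)}
      = {f : ℝ × ℝ × ℝ | 0 ≤ f.1 ∧ 0 ≤ f.2.2 ∧ f.2.1 ^ 2 ≤ 4 * (f.1 * f.2.2)} := by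
  obtain ⟨j, hoddj⟩ := hodd
  constructor
  · apply Set.Subset.antisymm
    · apply closure_minimal
      · rintro v ⟨m, c, x, hc, rfl⟩
        refine Finset.sum_induction _ (fun v : ℝ × ℝ × ℝ => 0 ≤ v.1 ∧ 0 ≤ v.2.2 ∧ v.2.1 ^ 2 ≤ v.1 * v.2.2)
          ?_ ?_ ?_
        · rintro ⟨a1, a2, a3⟩ ⟨b1, b2, b3⟩ ⟨ha1, ha3, ha2⟩ ⟨hb1, hb3, hb2⟩
          simp only [Prod.mk_add_mk]
          dsimp only at ha1 ha2 ha3 hb1 hb2 hb3 ⊢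
          refine ⟨by linarith, by linarith, ?_⟩
          have hprod : (a2 * b2) ^ 2 ≤ (a1 * a3) * (b1 * b3) := by
            calc (a2 * b2) ^ 2 = a2 ^ 2 * b2 ^ 2 := by ring
            _ ≤ (a1 * a3) * (b1 * b3) :=
              mul_le_mul ha2 hb2 (sq_nonneg b2) (mul_nonneg ha1 ha3)
          have hkey : 2 * (a2 * b2) ≤ a1 * b3 + a3 * b1 := by
            nlinarith [sq_nonneg (a1 * b3 - a3 * b1), mul_nonneg ha1 hb3, mul_nonneg ha3 hb1,
              hprod]
          nlinarith
        · simp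
        · intro t _
          simp only [Prod.smul_mk, smul_eq_mul, prod_two_mul, prod_add_exp]
          exact ⟨mul_nonneg (hc t) (sq_nonneg _), mul_nonneg (hc t) (sq_nonneg _),
            le_of_eq (by ring)⟩
      · rw [show {v : ℝ × ℝ × ℝ | 0 ≤ v.1 ∧ 0 ≤ v.2.2 ∧ v.2.1 ^ 2 ≤ v.1 * v.2.2}
            = {v : ℝ × ℝ × ℝ | 0 ≤ v.1} ∩ ({v : ℝ × ℝ × ℝ | 0 ≤ v.2.2} ∩
              {v : ℝ × ℝ × ℝ | v.2.1 ^ 2 ≤ v.1 * v.2.2}) from rfl]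
        refine IsClosed.inter (isClosed_le continuous_const continuous_fst)
          (IsClosed.inter (isClosed_le continuous_const ?_) (isClosed_le ?_ ?_))
        · exact continuous_snd.snd
        · exact (continuous_snd.fst).pow 2
        · exact continuous_fst.mul continuous_snd.snd
    · rintro ⟨p, q, r⟩ ⟨hp, hr, hq2⟩
      simp only at hp hr hq2
      set δ : ℕ → ℝ := fun m => ((m : ℝ) + 1)⁻¹ with hδ
      have hδpos : ∀ m, 0 < δ m := fun m => by positivity
      have hδ0 : Tendsto δ atTop (𝓝 0) := by
        simpa [hδ, one_div] using (tendsto_one_div_add_atTop_nhds_zero_nat : Tendsto (fun n : ℕ => 1 / ((n : ℝ) + 1)) atTop (𝓝 0))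
      by_cases hq : q = 0
      · subst hq
        have hmem : ∀ m : ℕ,
            ((p * (δ m) ^ 2) • (((δ m)⁻¹ ^ 2, (δ m)⁻¹, 1) : ℝ × ℝ × ℝ)
              + r • (((δ m) ^ 2, δ m, 1) : ℝ × ℝ × ℝ))
            ∈ {v : ℝ × ℝ × ℝ |
              ∃ (m : ℕ) (c : Fin m → ℝ) (x : Fin m → (Fin n → ℝ)),
                (∀ t, 0 ≤ c t) ∧
                v = ∑ t, c t • ((∏ i, x t i ^ (2 * α i), ∏ i, x t i ^ (α i + β i),
                    ∏ i, x t i ^ (2 * β i)) : ℝ × ℝ × ℝ)} := by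
          intro m
          exact two_mem α β j hoddj _ _ _ _
            (by positivity) hr (inv_ne_zero (hδpos m).ne') (hδpos m).ne'
        have heq : ∀ m : ℕ,
            ((p * (δ m) ^ 2) • (((δ m)⁻¹ ^ 2, (δ m)⁻¹, 1) : ℝ × ℝ × ℝ)
              + r • (((δ m) ^ 2, δ m, 1) : ℝ × ℝ × ℝ))
            = (p + r * (δ m) ^ 2, p * δ m + r * δ m, p * (δ m) ^ 2 + r) := by
          intro m
          have h0 := (hδpos m).ne'
          simp only [Prod.smul_mk, smul_eq_mul, Prod.mk_add_mk, Prod.mk.injEq]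
          refine ⟨by field_simp, by field_simp, by ring⟩
        have hlim : Tendsto
            (fun m => ((p + r * (δ m) ^ 2, p * δ m + r * δ m, p * (δ m) ^ 2 + r) : ℝ × ℝ × ℝ))
            atTop (𝓝 (p, 0, r)) := by
          have l1 : Tendsto (fun m => p + r * (δ m) ^ 2) atTop (𝓝 p) := by
            have : Tendsto (fun m : ℕ => p + r * (δ m) ^ 2) atTop (𝓝 (p + r * 0 ^ 2)) :=
              Tendsto.add tendsto_const_nhds (Tendsto.mul tendsto_const_nhds (hδ0.pow 2))
            simpa using this
          have l2 : Tendsto (fun m => p * δ m + r * δ m) atTop (𝓝 0) := by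
            have : Tendsto (fun m : ℕ => p * δ m + r * δ m) atTop (𝓝 (p * 0 + r * 0)) :=
              Tendsto.add (Tendsto.mul tendsto_const_nhds hδ0)
                (Tendsto.mul tendsto_const_nhds hδ0)
            simpa using this
          have l3 : Tendsto (fun m => p * (δ m) ^ 2 + r) atTop (𝓝 r) := by
            have : Tendsto (fun m : ℕ => p * (δ m) ^ 2 + r) atTop (𝓝 (p * 0 ^ 2 + r)) :=
              Tendsto.add (Tendsto.mul tendsto_const_nhds (hδ0.pow 2)) tendsto_const_nhds
            simpa using this
          exact l1.prodMk_nhds (l2.prodMk_nhds l3)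
        refine mem_closure_of_tendsto hlim (Filter.Eventually.of_forall fun m => ?_)
        rw [← heq m]
        exact hmem m
      · have hr0 : 0 < r := by
          rcases hr.lt_or_eq with h | h
          · exact h
          · exfalso
            apply hq
            have : q ^ 2 ≤ 0 := by nlinarith [hq2]
            nlinarith [sq_nonneg q]
        have hK : 0 ≤ p - q ^ 2 / r := by
          rw [sub_nonneg, div_le_iff₀ hr0]
          exact hq2
        have htq : q / r ≠ 0 := div_ne_zero hq hr0.ne'
        have hmem : ∀ m : ℕ,
            (r • (((q / r) ^ 2, q / r, 1) : ℝ × ℝ × ℝ)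
              + ((p - q ^ 2 / r) * (δ m) ^ 2) • (((δ m)⁻¹ ^ 2, (δ m)⁻¹, 1) : ℝ × ℝ × ℝ))
            ∈ {v : ℝ × ℝ × ℝ |
              ∃ (m : ℕ) (c : Fin m → ℝ) (x : Fin m → (Fin n → ℝ)),
                (∀ t, 0 ≤ c t) ∧
                v = ∑ t, c t • ((∏ i, x t i ^ (2 * α i), ∏ i, x t i ^ (α i + β i),
                    ∏ i, x t i ^ (2 * β i)) : ℝ × ℝ × ℝ)} := by
          intro m
          exact two_mem α β j hoddj _ _ _ _
            hr (mul_nonneg hK (sq_nonneg _)) htq (inv_ne_zero (hδpos m).ne')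
        have heq : ∀ m : ℕ,
            (r • (((q / r) ^ 2, q / r, 1) : ℝ × ℝ × ℝ)
              + ((p - q ^ 2 / r) * (δ m) ^ 2) • (((δ m)⁻¹ ^ 2, (δ m)⁻¹, 1) : ℝ × ℝ × ℝ))
            = (p, q + (p - q ^ 2 / r) * δ m, r + (p - q ^ 2 / r) * (δ m) ^ 2) := by
          intro m
          have h0 := (hδpos m).ne'
          simp only [Prod.smul_mk, smul_eq_mul, Prod.mk_add_mk, Prod.mk.injEq]
          refine ⟨by field_simp; ring, by field_simp, by ring⟩
        have hlim : Tendsto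
            (fun m => ((p, q + (p - q ^ 2 / r) * δ m, r + (p - q ^ 2 / r) * (δ m) ^ 2) : ℝ × ℝ × ℝ))
            atTop (𝓝 (p, q, r)) := by
          have l2 : Tendsto (fun m => q + (p - q ^ 2 / r) * δ m) atTop (𝓝 q) := by
            have : Tendsto (fun m : ℕ => q + (p - q ^ 2 / r) * δ m) atTop
                (𝓝 (q + (p - q ^ 2 / r) * 0)) :=
              Tendsto.add tendsto_const_nhds (Tendsto.mul tendsto_const_nhds hδ0)
            simpa using this
          have l3 : Tendsto (fun m => r + (p - q ^ 2 / r) * (δ m) ^ 2) atTop (𝓝 r) := by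
            have : Tendsto (fun m : ℕ => r + (p - q ^ 2 / r) * (δ m) ^ 2) atTop
                (𝓝 (r + (p - q ^ 2 / r) * 0 ^ 2)) :=
              Tendsto.add tendsto_const_nhds (Tendsto.mul tendsto_const_nhds (hδ0.pow 2))
            simpa using this
          exact tendsto_const_nhds.prodMk_nhds (l2.prodMk_nhds l3)
        refine mem_closure_of_tendsto hlim (Filter.Eventually.of_forall fun m => ?_)
        rw [← heq m]
        exact hmem m
  · ext f
    simp only [Set.mem_setOf_eq]
    constructor
    · intro hf
      have hr : ∀ t : ℝ, t ≠ 0 → 0 ≤ f.1 * t ^ 2 + f.2.1 * t + f.2.2 := by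
        intro t ht
        obtain ⟨x, d, hd, he⟩ := gen_repr α β j hoddj t ht
        have h := hf x
        simp only [Prod.smul_mk, smul_eq_mul, Prod.mk.injEq] at he
        obtain ⟨he1, he2, he3⟩ := he
        rw [he1, he2, he3] at h
        by_contra hneg
        push_neg at hneg
        nlinarith [mul_neg_of_pos_of_neg hd hneg]
      exact quad_facts _ _ _ hr
    · rintro ⟨h1, h3, hd⟩ x
      rw [prod_two_mul, prod_two_mul, prod_add_exp]
      set u := ∏ i, x i ^ α i
      set v := ∏ i, x i ^ β i
      rcases h1.lt_or_eq with hpos | hzero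
      · have h4 : 0 ≤ (4 * (f.1 * f.2.2) - f.2.1 ^ 2) * v ^ 2 :=
          mul_nonneg (by linarith) (sq_nonneg v)
        nlinarith [sq_nonneg (2 * f.1 * u + f.2.1 * v), h4]
      · have hf2 : f.2.1 = 0 := by nlinarith [sq_nonneg f.2.1]
        rw [hf2, ← hzero]
        simp only [zero_mul, mul_zero, zero_add, add_zero]
        positivity
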